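/- Let p ≥ 2 and x, Δ ∈ ℝ^n. Define g, r ∈ ℝ^n by g_i = p|x_i|^{p−2}x_i and r_i = |x_i|^{p−2} for i ∈ [n]. Then (p/8)·Σ_{i∈[n]} r_iΔ_i^2 + 2^{−p−1}·‖Δ‖_p^p ≤ ‖x+Δ‖_p^p − ‖x‖_p^p − g^⊤Δ ≤ 2p^2·Σ_{i∈[n]} r_iΔ_i^2 + p^p·‖Δ‖_p^p. -/

import Mathlib

set_option maxHeartbeats 1000000

open Real Set

lemma mono_of_deriv {f f' : ℝ → ℝ} {a b : ℝ} (hab : a ≤ b)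
    (hf : ∀ x ∈ Set.Icc a b, HasDerivAt f (f' x) x)
    (h0 : ∀ x ∈ Set.Icc a b, 0 ≤ f' x) : f a ≤ f b := by
  have := monotoneOn_of_deriv_nonneg (convex_Icc a b)
    (fun x hx => (hf x hx).continuousAt.continuousWithinAt)
    (fun x hx => (hf x (interior_subset hx)).differentiableAt.differentiableWithinAt)
    (fun x hx => by rw [(hf x (interior_subset hx)).deriv]; exact h0 x (interior_subset hx))
  exact this (Set.left_mem_Icc.2 hab) (Set.right_mem_Icc.2 hab) hab

lemma hd_affine {q : ℝ} (hq : 1 ≤ q) (c d x : ℝ) :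
    HasDerivAt (fun y => (c + d*y) ^ q) (q * (c + d*x) ^ (q-1) * d) x := by
  have h1 : HasDerivAt (fun y : ℝ => c + d*y) d x := by
    simpa using ((hasDerivAt_id x).const_mul d).const_add c
  exact (Real.hasDerivAt_rpow_const (Or.inr hq)).comp x h1

lemma hd_one_add {q : ℝ} (hq : 1 ≤ q) (x : ℝ) :
    HasDerivAt (fun y => (1+y) ^ q) (q * (1+x) ^ (q-1)) x := by
  have h := hd_affine hq 1 1 x
  simp only [one_mul] at h
  simpa using h

lemma hd_one_sub {q : ℝ} (hq : 1 ≤ q) (x : ℝ) :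
    HasDerivAt (fun y => (1-y) ^ q) (-(q * (1-x) ^ (q-1))) x := by
  have h := hd_affine hq 1 (-1) x
  simp only [neg_one_mul, ← sub_eq_add_neg] at h
  simpa [mul_neg] using h

lemma bern2 {p : ℝ} (hp : 2 ≤ p) {s : ℝ} (hs : 0 ≤ s) :
    1 + p*s + p*(p-1)/2*s^2 ≤ (1+s)^p := by
  have hp1 : (1:ℝ) ≤ p := by linarith
  have hp1' : (1:ℝ) ≤ p - 1 := by linarith
  have key : ∀ x ∈ Set.Icc 0 s,
      HasDerivAt (fun y => (1+y)^p - (1 + p*y + p*(p-1)/2*y^2))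
        (p * (1+x)^(p-1) - (p + p*(p-1)*x)) x := by
    intro x hx
    have ha : HasDerivAt (fun y : ℝ => 1 + p*y) p x := by
      simpa using ((hasDerivAt_id x).const_mul p).const_add 1
    have hb := (hasDerivAt_pow 2 x).const_mul (p*(p-1)/2)
    have h2 := ha.add hb
    have h1 := hd_one_add hp1 x
    have := h1.sub h2
    exact this.congr_deriv (by push_cast; ring)
  have h0 : ∀ x ∈ Set.Icc 0 s, 0 ≤ p * (1+x)^(p-1) - (p + p*(p-1)*x) := by
    intro x hx
    have hx0 : 0 ≤ x := hx.1
    have hb : 1 + (p-1)*x ≤ (1+x)^(p-1) :=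
      one_add_mul_self_le_rpow_one_add (by linarith) hp1'
    have hp0 : 0 < p := by linarith
    nlinarith [mul_le_mul_of_nonneg_left hb (le_of_lt hp0)]
  have := mono_of_deriv hs key h0
  norm_num [Real.one_rpow] at this
  linarith

lemma pow2_small {p : ℝ} (hp : 2 ≤ p) : (2:ℝ)^(-p-1) ≤ 1/8 := by
  have : (2:ℝ)^(-p-1) ≤ (2:ℝ)^(-3:ℝ) :=
    Real.rpow_le_rpow_of_exponent_le (by norm_num) (by linarith)
  have h3 : (2:ℝ)^(-3:ℝ) = 1/8 := by
    rw [Real.rpow_neg (by norm_num), show (3:ℝ) = ((3:ℕ):ℝ) by norm_num,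
      Real.rpow_natCast]
    norm_num
  rw [h3] at this
  exact this

lemma rpow_two' {t : ℝ} : t ^ (2:ℝ) = t^2 := by
  rw [show (2:ℝ) = ((2:ℕ):ℝ) by norm_num, Real.rpow_natCast]

lemma tp_le_t2 {p : ℝ} (hp : 2 ≤ p) {t : ℝ} (ht : 0 ≤ t) (ht1 : t ≤ 1) : t^p ≤ t^2 := by
  rcases eq_or_lt_of_le ht with h | h
  · rw [← h, Real.zero_rpow (by linarith)]; positivity
  · rw [← rpow_two']
    exact Real.rpow_le_rpow_of_exponent_ge h ht1 hp

lemma t2_le_tp {p : ℝ} (hp : 2 ≤ p) {t : ℝ} (ht : 1 ≤ t) : t^2 ≤ t^p := by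
  rw [← rpow_two']
  exact Real.rpow_le_rpow_of_exponent_le ht hp

lemma lowpos {p : ℝ} (hp : 2 ≤ p) {t : ℝ} (ht : 0 ≤ t) :
    p/8*t^2 + (2:ℝ)^(-p-1)*t^p ≤ (1+t)^p - 1 - p*t := by
  have hX : (2:ℝ)^(-p-1) ≤ 1/8 := pow2_small hp
  have hX0 : (0:ℝ) ≤ (2:ℝ)^(-p-1) := Real.rpow_nonneg (by norm_num) _
  rcases le_total t 1 with h1 | h1
  · have hb := bern2 hp ht
    have h2 : t^p ≤ t^2 := tp_le_t2 hp ht h1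
    have h5 : (2:ℝ)^(-p-1)*t^p ≤ (1/8)*t^2 :=
      mul_le_mul hX h2 (Real.rpow_nonneg ht p) (by norm_num)
    nlinarith [mul_nonneg (show (0:ℝ) ≤ 4*p*(p-1)-(p+1) by nlinarith) (sq_nonneg t)]
  · have ht0 : 0 < t := lt_of_lt_of_le one_pos h1
    have hb := bern2 hp (show (0:ℝ) ≤ 1/t by positivity)
    have hA0 : 0 < t^p := Real.rpow_pos_of_pos ht0 p
    have e2 : (1+1/t)^p * t^p = (1+t)^p := by
      rw [← Real.mul_rpow (by positivity) (le_of_lt ht0)]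
      congr 1; field_simp; ring
    have hmul := mul_le_mul_of_nonneg_right hb (le_of_lt hA0)
    rw [e2] at hmul
    have eB : t^p * (1/t) = t^(p-1) := by
      rw [Real.rpow_sub ht0, Real.rpow_one]; field_simp
    have eC : t^p * (1/t)^2 = t^(p-2) := by
      rw [Real.rpow_sub ht0, rpow_two']; field_simp
    have hB : t ≤ t^(p-1) := by
      nth_rewrite 1 [← Real.rpow_one t]
      exact Real.rpow_le_rpow_of_exponent_le h1 (by linarith)
    have hC1 : (1:ℝ) ≤ t^(p-2) := by
      rw [← Real.rpow_zero t]
      exact Real.rpow_le_rpow_of_exponent_le h1 (by linarith)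
    have hA2 : t^2 ≤ t^p := t2_le_tp hp h1
    have key : t^p + p*t^(p-1) + p*(p-1)/2*t^(p-2) ≤ (1+t)^p := by
      calc t^p + p*t^(p-1) + p*(p-1)/2*t^(p-2)
          = (1 + p*(1/t) + p*(p-1)/2*(1/t)^2) * t^p := by
            rw [add_mul, add_mul, one_mul, mul_comm (t^p) (1/t)] at *
            rw [← eB, ← eC]; ring
        _ ≤ (1+t)^p := hmul
    have hXA : (2:ℝ)^(-p-1)*t^p ≤ (1/2)*t^p := by
      exact mul_le_mul_of_nonneg_right (by linarith) (le_of_lt hA0)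
    rcases le_total p 4 with h4 | h4
    · nlinarith [mul_nonneg (show (0:ℝ) ≤ p by linarith) (sub_nonneg.2 hB),
        mul_nonneg (show (0:ℝ) ≤ p by linarith) (sub_nonneg.2 hA2),
        mul_nonneg (mul_nonneg (show (0:ℝ) ≤ p by linarith) (show (0:ℝ) ≤ p-1 by linarith)) (sub_nonneg.2 hC1)]
    · have hC2 : t^2 ≤ t^(p-2) := by
        rw [← rpow_two']
        exact Real.rpow_le_rpow_of_exponent_le h1 (by linarith)
      have ht2 : (1:ℝ) ≤ t^2 := by nlinarith [mul_nonneg (sub_nonneg.2 h1) (show (0:ℝ) ≤ t+1 by linarith)]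
      nlinarith [mul_nonneg (show (0:ℝ) ≤ p by linarith) (sub_nonneg.2 hB),
        mul_nonneg (mul_nonneg (show (0:ℝ) ≤ p by linarith) (show (0:ℝ) ≤ p-1 by linarith)) (sub_nonneg.2 hC2),
        mul_nonneg (show (0:ℝ) ≤ 3*p/8 by linarith) (sub_nonneg.2 ht2), hA2, ht2]

lemma expand_U1 {p : ℝ} (hp : 2 ≤ p) {t : ℝ} (ht : 0 ≤ t) (ht1 : t ≤ 1) :
    (1+t)^(p-1) ≤ 1 + 4*p*t + p^p*t^(p-1) := by
  have hp1 : (1:ℝ) ≤ p - 1 := by linarith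
  have hp0 : (0:ℝ) < p := by linarith
  have htp0 : (0:ℝ) ≤ t^(p-1) := Real.rpow_nonneg ht _
  have hpp0 : (0:ℝ) ≤ p^p := Real.rpow_nonneg (le_of_lt hp0) _
  rcases le_total ((p-1)*t) (1/2) with hc | hc
  · -- small t
    have hber : 1 - (p-1)*t ≤ (1-t)^(p-1) := by
      have := one_add_mul_self_le_rpow_one_add (show (-1:ℝ) ≤ -t by linarith) hp1
      rw [show (1:ℝ) + -t = 1 - t by ring] at this
      linarith
    have hprod : (1-t)^(p-1) * (1+t)^(p-1) ≤ 1 := by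
      rw [← Real.mul_rpow (by linarith) (by linarith)]
      apply Real.rpow_le_one (by nlinarith) (by nlinarith) (by linarith)
    have hP0 : (0:ℝ) ≤ (1+t)^(p-1) := Real.rpow_nonneg (by linarith) _
    have h2 : (1 - (p-1)*t) * (1+t)^(p-1) ≤ 1 :=
      le_trans (mul_le_mul_of_nonneg_right hber hP0) hprod
    have hs0 : 0 ≤ (p-1)*t := mul_nonneg (by linarith) ht
    nlinarith [mul_nonneg hpp0 htp0, mul_nonneg hs0 hs0]
  · rcases le_total ((p-1)*t) 1 with hc2 | hc2
    · -- middle t : use exp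
      have h1 : (1+t)^(p-1) ≤ (Real.exp t)^(p-1) :=
        Real.rpow_le_rpow (by linarith) (by linarith [Real.add_one_le_exp t]) (by linarith)
      have h2 : (Real.exp t)^(p-1) = Real.exp (t*(p-1)) := (Real.exp_mul t (p-1)).symm
      have h3 : Real.exp (t*(p-1)) ≤ Real.exp 1 := by
        apply Real.exp_le_exp.2; nlinarith
      have h4 : Real.exp 1 ≤ 3 := by
        have := Real.exp_one_lt_d9; linarith
      have h5 : (1:ℝ) ≤ 2*p*t := by nlinarith
      nlinarith [mul_nonneg hpp0 htp0]
    · -- large t : 1+t ≤ p*t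
      have h1 : 1 + t ≤ p*t := by nlinarith
      have h2 : (1+t)^(p-1) ≤ (p*t)^(p-1) :=
        Real.rpow_le_rpow (by linarith) h1 (by linarith)
      have h3 : (p*t)^(p-1) = p^(p-1) * t^(p-1) := Real.mul_rpow (le_of_lt hp0) ht
      have h4 : p^(p-1) ≤ p^p := Real.rpow_le_rpow_of_exponent_le (by linarith) (by linarith)
      have h6 : 0 ≤ 4*p*t := by positivity
      nlinarith [mul_le_mul_of_nonneg_right h4 htp0]

lemma uppos1 {p : ℝ} (hp : 2 ≤ p) {t : ℝ} (ht : 0 ≤ t) (ht1 : t ≤ 1) :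
    (1+t)^p - 1 - p*t ≤ 2*p^2*t^2 + p^p*t^p := by
  have hp1 : (1:ℝ) ≤ p := by linarith
  have key : ∀ x ∈ Set.Icc 0 t,
      HasDerivAt (fun y => 2*p^2*y^2 + p^p*y^p - ((1+y)^p - 1 - p*y))
        (4*p^2*x + p^p*(p*x^(p-1)) - (p*(1+x)^(p-1) - p)) x := by
    intro x hx
    have ha := (hasDerivAt_pow 2 x).const_mul (2*p^2)
    have hb := (Real.hasDerivAt_rpow_const (x := x) (p := p) (Or.inr hp1)).const_mul (p^p)
    have hc := hd_one_add hp1 x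
    have hdd : HasDerivAt (fun y : ℝ => p*y) p x := by
      simpa using (hasDerivAt_id x).const_mul p
    have H := (ha.add hb).sub ((hc.sub_const 1).sub hdd)
    exact H.congr_deriv (by push_cast; ring)
  have h0 : ∀ x ∈ Set.Icc 0 t, 0 ≤ 4*p^2*x + p^p*(p*x^(p-1)) - (p*(1+x)^(p-1) - p) := by
    intro x hx
    have hu := expand_U1 hp hx.1 (le_trans hx.2 ht1)
    nlinarith [mul_le_mul_of_nonneg_left hu (show (0:ℝ) ≤ p by linarith)]
  have := mono_of_deriv ht key h0
  norm_num [Real.zero_rpow (show p ≠ 0 by linarith), Real.one_rpow] at this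
  linarith

lemma uppos {p : ℝ} (hp : 2 ≤ p) {t : ℝ} (ht : 0 ≤ t) :
    (1+t)^p - 1 - p*t ≤ 2*p^2*t^2 + p^p*t^p := by
  rcases le_total t 1 with h1 | h1
  · exact uppos1 hp ht h1
  · have h2 : (1+t)^p ≤ (2*t)^p :=
      Real.rpow_le_rpow (by linarith) (by linarith) (by linarith)
    have h3 : (2*t)^p = 2^p * t^p := Real.mul_rpow (by norm_num) ht
    have h4 : (2:ℝ)^p ≤ p^p := Real.rpow_le_rpow (by norm_num) hp (by linarith)
    have htp : (0:ℝ) ≤ t^p := Real.rpow_nonneg ht _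
    nlinarith [mul_le_mul_of_nonneg_right h4 htp, sq_nonneg t,
      mul_nonneg (mul_nonneg (show (0:ℝ) ≤ p by linarith) ht) (sub_nonneg.2 h1)]

lemma base_pow_le_base {q : ℝ} (hq : 1 ≤ q) {b : ℝ} (hb : 0 ≤ b) (hb1 : b ≤ 1) :
    b ^ q ≤ b := by
  rcases eq_or_lt_of_le hb with h | h
  · rw [← h, Real.zero_rpow (by linarith)]
  · nth_rewrite 2 [← Real.rpow_one b]
    exact Real.rpow_le_rpow_of_exponent_ge h hb1 hq

lemma upneg1 {p : ℝ} (hp : 2 ≤ p) {u : ℝ} (hu : 0 ≤ u) (hu1 : u ≤ 1) :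
    (1-u)^p - 1 + p*u ≤ 2*p^2*u^2 := by
  have hp1 : (1:ℝ) ≤ p := by linarith
  have key : ∀ x ∈ Set.Icc 0 u,
      HasDerivAt (fun y => 2*p^2*y^2 - ((1-y)^p - 1 + p*y))
        (4*p^2*x - (-(p*(1-x)^(p-1)) + p)) x := by
    intro x hx
    have ha := (hasDerivAt_pow 2 x).const_mul (2*p^2)
    have hc := hd_one_sub hp1 x
    have hdd : HasDerivAt (fun y : ℝ => p*y) p x := by
      simpa using (hasDerivAt_id x).const_mul p
    have H := ha.sub ((hc.sub_const 1).add hdd)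
    exact H.congr_deriv (by push_cast; ring)
  have h0 : ∀ x ∈ Set.Icc 0 u, 0 ≤ 4*p^2*x - (-(p*(1-x)^(p-1)) + p) := by
    intro x hx
    have hx1 : x ≤ 1 := le_trans hx.2 hu1
    have hber : 1 - (p-1)*x ≤ (1-x)^(p-1) := by
      have := one_add_mul_self_le_rpow_one_add (show (-1:ℝ) ≤ -x by linarith) (show (1:ℝ) ≤ p-1 by linarith)
      rw [show (1:ℝ) + -x = 1 - x by ring] at this
      linarith
    nlinarith [mul_le_mul_of_nonneg_left hber (show (0:ℝ) ≤ p by linarith), hx.1]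
  have := mono_of_deriv hu key h0
  norm_num [Real.one_rpow] at this
  linarith

lemma upneg {p : ℝ} (hp : 2 ≤ p) {u : ℝ} (hu : 1 ≤ u) :
    (u-1)^p - 1 + p*u ≤ 2*p^2*u^2 + p^p*u^p := by
  have h1 : (u-1)^p ≤ u^p := Real.rpow_le_rpow (by linarith) (by linarith) (by linarith)
  have h2 : (1:ℝ) ≤ p^p := by
    nth_rewrite 1 [← Real.one_rpow p]
    exact Real.rpow_le_rpow (by norm_num) (by linarith) (by linarith)
  have h3 : (0:ℝ) ≤ u^p := Real.rpow_nonneg (by linarith) _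
  nlinarith [mul_le_mul_of_nonneg_right h2 h3,
    mul_nonneg (mul_nonneg (show (0:ℝ) ≤ p by linarith) (show (0:ℝ) ≤ u by linarith)) (sub_nonneg.2 hu),
    mul_nonneg (mul_nonneg (show (0:ℝ) ≤ p by linarith) (show (0:ℝ) ≤ 2*p-1 by linarith)) (sq_nonneg u)]

lemma lowneg1 {p : ℝ} (hp : 2 ≤ p) {u : ℝ} (hu : 0 ≤ u) (hu1 : u ≤ 1) :
    p/8*u^2 + (2:ℝ)^(-p-1)*u^p ≤ (1-u)^p - 1 + p*u := by
  have hp1 : (1:ℝ) ≤ p := by linarith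
  have key : ∀ x ∈ Set.Icc 0 u,
      HasDerivAt (fun y => ((1-y)^p - 1 + p*y) - (p+1)/8*y^2)
        ((-(p*(1-x)^(p-1)) + p) - (p+1)/8*(2*x)) x := by
    intro x hx
    have ha := (hasDerivAt_pow 2 x).const_mul ((p+1)/8)
    have hc := hd_one_sub hp1 x
    have hdd : HasDerivAt (fun y : ℝ => p*y) p x := by
      simpa using (hasDerivAt_id x).const_mul p
    have H := ((hc.sub_const 1).add hdd).sub ha
    exact H.congr_deriv (by push_cast; ring)
  have h0 : ∀ x ∈ Set.Icc 0 u, 0 ≤ (-(p*(1-x)^(p-1)) + p) - (p+1)/8*(2*x) := by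
    intro x hx
    have hx1 : x ≤ 1 := le_trans hx.2 hu1
    have hb : (1-x)^(p-1) ≤ 1-x :=
      base_pow_le_base (by linarith) (by linarith) (by linarith [hx.1])
    nlinarith [mul_le_mul_of_nonneg_left hb (show (0:ℝ) ≤ p by linarith), hx.1]
  have hmono := mono_of_deriv hu key h0
  norm_num [Real.one_rpow] at hmono
  -- hmono : (p+1)/8*u^2 ≤ (1-u)^p - 1 + p*u   (roughly)
  have h2 : u^p ≤ u^2 := tp_le_t2 hp hu hu1
  have hX : (2:ℝ)^(-p-1) ≤ 1/8 := pow2_small hp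
  have h5 : (2:ℝ)^(-p-1)*u^p ≤ (1/8)*u^2 :=
    mul_le_mul hX h2 (Real.rpow_nonneg hu p) (by norm_num)
  nlinarith [hmono]

lemma two_rpow_id {q r : ℝ} : (2:ℝ)^q * (2:ℝ)^r = (2:ℝ)^(q+r) :=
  (Real.rpow_add (by norm_num) q r).symm

lemma lowneg {p : ℝ} (hp : 2 ≤ p) {u : ℝ} (hu : 1 ≤ u) :
    p/8*u^2 + (2:ℝ)^(-p-1)*u^p ≤ (u-1)^p - 1 + p*u := by
  have hp0 : (0:ℝ) < p := by linarith
  have hu0 : (0:ℝ) < u := by linarith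
  have hX0 : (0:ℝ) ≤ (2:ℝ)^(-p-1) := Real.rpow_nonneg (by norm_num) _
  have hA0 : (0:ℝ) ≤ u^p := Real.rpow_nonneg (le_of_lt hu0) _
  have hpu : 2 ≤ p*u := by nlinarith
  have h2p0 : (0:ℝ) < (2:ℝ)^p := Real.rpow_pos_of_pos (by norm_num) _
  have he : (2:ℝ)^(-p-1)*(2:ℝ)^p = 1/2 := by
    rw [two_rpow_id, show -p-1+p = (-1:ℝ) by ring,
      Real.rpow_neg (by norm_num), Real.rpow_one]
    norm_num
  rcases le_total u 2 with h2 | h2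
  · have hup : u^p ≤ (2:ℝ)^p := Real.rpow_le_rpow (le_of_lt hu0) h2 (le_of_lt hp0)
    have hX2 : (2:ℝ)^(-p-1)*u^p ≤ 1/2 := by
      calc (2:ℝ)^(-p-1)*u^p ≤ (2:ℝ)^(-p-1)*(2:ℝ)^p := mul_le_mul_of_nonneg_left hup hX0
        _ = 1/2 := he
    have hm1 : (0:ℝ) ≤ (u-1)^p := Real.rpow_nonneg (by linarith) _
    nlinarith [mul_nonneg (mul_nonneg (le_of_lt hp0) (show (0:ℝ) ≤ 2-u by linarith)) (le_of_lt hu0)]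
  · have hhalf : (u/2)^p ≤ (u-1)^p :=
      Real.rpow_le_rpow (by positivity) (by linarith) (le_of_lt hp0)
    have hsplit : (u/2)^p = 2*((2:ℝ)^(-p-1)*u^p) := by
      rw [Real.div_rpow (le_of_lt hu0) (by norm_num : (0:ℝ) ≤ 2),
        div_eq_iff (ne_of_gt h2p0)]
      linear_combination (-2*u^p) * he
    rcases le_total u 4 with h4 | h4
    · nlinarith [hhalf, hsplit, mul_nonneg hX0 hA0,
        mul_nonneg (mul_nonneg (le_of_lt hp0) (show (0:ℝ) ≤ 4-u by linarith)) (le_of_lt hu0)]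
    · rcases le_total u 8 with h8 | h8
      · have h4p : (4:ℝ)^p ≤ u^p := Real.rpow_le_rpow (by norm_num) h4 (le_of_lt hp0)
        have he4 : (4:ℝ)^p = (2:ℝ)^(2*p) := by
          rw [show (4:ℝ) = (2:ℝ)^(2:ℝ) by rw [rpow_two']; norm_num,
            ← Real.rpow_mul (by norm_num : (0:ℝ) ≤ 2)]
        have hX2 : 2 ≤ (2:ℝ)^(-p-1)*u^p := by
          have h1 : (2:ℝ)^(-p-1)*(4:ℝ)^p ≤ (2:ℝ)^(-p-1)*u^p := mul_le_mul_of_nonneg_left h4p hX0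
          have h2' : (2:ℝ)^(-p-1)*(4:ℝ)^p = (2:ℝ)^(p-1) := by
            rw [he4, two_rpow_id, show -p-1+2*p = p-1 by ring]
          have h3 : (2:ℝ)^(1:ℝ) ≤ (2:ℝ)^(p-1) :=
            Real.rpow_le_rpow_of_exponent_le (by norm_num) (by linarith)
          rw [Real.rpow_one] at h3
          linarith
        nlinarith [hhalf, hsplit,
          mul_nonneg (mul_nonneg (le_of_lt hp0) (show (0:ℝ) ≤ 8-u by linarith)) (le_of_lt hu0)]
      · -- u ≥ 8
        have h78 : ((7/8)*u)^p ≤ (u-1)^p :=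
          Real.rpow_le_rpow (by positivity) (by linarith) (le_of_lt hp0)
        have hYA : ((7/8)*u)^p = (7/8:ℝ)^p * u^p := Real.mul_rpow (by norm_num) (le_of_lt hu0)
        have hY0 : (0:ℝ) ≤ (7/8:ℝ)^p := Real.rpow_nonneg (by norm_num) _
        have hu64 : (64:ℝ) ≤ u^2 := by nlinarith
        have hA1 : (2:ℝ)^(-p-1) = ((2:ℝ)^p)⁻¹/2 := by
          field_simp
          linear_combination 2 * he
        have h12 : ((2:ℝ)^p)⁻¹ = (1/2:ℝ)^p := by
          rw [show (1/2:ℝ) = (2:ℝ)⁻¹ by norm_num, Real.inv_rpow (by norm_num)]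
        have h1278 : (1/2:ℝ)^p ≤ (7/8:ℝ)^p :=
          Real.rpow_le_rpow (by norm_num) (by norm_num) (le_of_lt hp0)
        have hXY : (2:ℝ)^(-p-1)*u^p ≤ (7/8:ℝ)^p*u^p/2 := by
          rw [hA1, h12]
          nlinarith [mul_le_mul_of_nonneg_right h1278 hA0]
        have hf2 : (8:ℝ)^(p-2)*u^2 ≤ u^p := by
          have h1 : (8:ℝ)^(p-2) ≤ u^(p-2) :=
            Real.rpow_le_rpow (by norm_num) h8 (by linarith)
          have h2' : u^(p-2)*u^2 = u^p := by
            rw [← rpow_two', ← Real.rpow_add hu0, show p-2+2 = p by ring]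
          nlinarith [sq_nonneg u, mul_le_mul_of_nonneg_right h1 (sq_nonneg u)]
        have h8p0 : (0:ℝ) < (8:ℝ)^p := Real.rpow_pos_of_pos (by norm_num) _
        have hf3 : (7/8:ℝ)^p*(8:ℝ)^(p-2) = (7:ℝ)^p/64 := by
          rw [Real.div_rpow (by norm_num) (by norm_num : (0:ℝ) ≤ 8),
            Real.rpow_sub (by norm_num : (0:ℝ) < 8), rpow_two']
          field_simp
          ring
        have hYA2 : (7:ℝ)^p/64*u^2 ≤ (7/8:ℝ)^p*u^p := by
          calc (7:ℝ)^p/64*u^2 = (7/8:ℝ)^p*((8:ℝ)^(p-2)*u^2) := by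
                rw [← mul_assoc, hf3]
            _ ≤ (7/8:ℝ)^p*u^p := mul_le_mul_of_nonneg_left hf2 hY0
        rcases le_total p 3 with hp3 | hp3
        · have hY3 : (343/512:ℝ) ≤ (7/8:ℝ)^p := by
            have h1 : (7/8:ℝ)^p ≥ (7/8:ℝ)^(3:ℝ) :=
              Real.rpow_le_rpow_of_exponent_ge (by norm_num) (by norm_num) hp3
            have h2' : (7/8:ℝ)^(3:ℝ) = 343/512 := by
              rw [show (3:ℝ) = ((3:ℕ):ℝ) by norm_num, Real.rpow_natCast]
              norm_num
            linarith
          have hX8 : (2:ℝ)^(-p-1)*u^p ≤ u^p/8 := by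
            nlinarith [mul_le_mul_of_nonneg_right (pow2_small hp) hA0]
          have hA2 : u^2 ≤ u^p := t2_le_tp hp hu
          have k1 : (343/512)*u^p ≤ (u-1)^p := by
            calc (343/512)*u^p ≤ (7/8:ℝ)^p*u^p := mul_le_mul_of_nonneg_right hY3 hA0
              _ = ((7/8)*u)^p := hYA.symm
              _ ≤ (u-1)^p := h78
          have k3 : p/8*u^2 ≤ (192/512)*u^p := by
            nlinarith [hA2, mul_nonneg (show (0:ℝ) ≤ 3-p by linarith) (sq_nonneg u)]
          linarith [k1, k3, hX8, hA2, hu64,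
            mul_nonneg (le_of_lt hp0) (le_of_lt hu0)]
        · have h7p : (32:ℝ)*p ≤ (7:ℝ)^p := by
            have hb : 1+(p-2)*6 ≤ (7:ℝ)^(p-2) := by
              have := one_add_mul_self_le_rpow_one_add (show (-1:ℝ) ≤ 6 by norm_num)
                (show (1:ℝ) ≤ p-2 by linarith)
              rw [show (1:ℝ)+6 = 7 by norm_num] at this
              exact this
            have he7 : (7:ℝ)^(p-2)*(49:ℝ) = (7:ℝ)^p := by
              rw [show (49:ℝ) = (7:ℝ)^(2:ℝ) by rw [rpow_two']; norm_num,
                ← Real.rpow_add (by norm_num : (0:ℝ) < 7), show p-2+2 = p by ring]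
            nlinarith [hb, he7]
          have m1 : (7/8:ℝ)^p*u^p ≤ (u-1)^p := hYA ▸ h78
          have m3 : p*u^2/2 ≤ (7:ℝ)^p/64*u^2 := by
            nlinarith [mul_nonneg (sub_nonneg.2 h7p) (sq_nonneg u)]
          nlinarith [m1, m3, hXY, hYA2,
            mul_nonneg (le_of_lt hp0) (sub_nonneg.2 hu64),
            mul_nonneg (le_of_lt hp0) (le_of_lt hu0)]

lemma scalar_t {p : ℝ} (hp : 2 ≤ p) (t : ℝ) :
    p/8*t^2 + (2:ℝ)^(-p-1)*|t|^p ≤ |1+t|^p - 1 - p*t ∧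
    |1+t|^p - 1 - p*t ≤ 2*p^2*t^2 + p^p*|t|^p := by
  rcases le_total 0 t with ht | ht
  · rw [abs_of_nonneg ht, abs_of_nonneg (by linarith : (0:ℝ) ≤ 1+t)]
    exact ⟨lowpos hp ht, uppos hp ht⟩
  · have habs1 : |t| = -t := abs_of_nonpos ht
    have hu0 : (0:ℝ) ≤ -t := by linarith
    rcases le_total (-t) 1 with h1 | h1
    · have habs : |1+t| = 1-(-t) := by
        rw [abs_of_nonneg (by linarith : (0:ℝ) ≤ 1+t)]; ring
      rw [habs1, habs]
      have hL := lowneg1 hp hu0 h1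
      have hU := upneg1 hp hu0 h1
      have hpp : (0:ℝ) ≤ p^p*(-t)^p :=
        mul_nonneg (Real.rpow_nonneg (by linarith) _) (Real.rpow_nonneg hu0 _)
      constructor <;> nlinarith [hL, hU, hpp]
    · have habs : |1+t| = (-t)-1 := by
        rw [abs_of_nonpos (by linarith : 1+t ≤ 0)]; ring
      rw [habs1, habs]
      have hL := lowneg hp h1
      have hU := upneg hp h1
      constructor <;> nlinarith [hL, hU]

lemma scalar_pos {p : ℝ} (hp : 2 ≤ p) {a : ℝ} (ha : 0 < a) (d : ℝ) :
    p/8*(|a|^(p-2)*d^2) + (2:ℝ)^(-p-1)*|d|^p ≤ |a+d|^p - |a|^p - (p*|a|^(p-2)*a)*d ∧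
    |a+d|^p - |a|^p - (p*|a|^(p-2)*a)*d ≤ 2*p^2*(|a|^(p-2)*d^2) + p^p*|d|^p := by
  set t := d/a with htdef
  have hd : d = a*t := by rw [htdef]; field_simp
  have haa : |a| = a := abs_of_pos ha
  have hap : (0:ℝ) < a^p := Real.rpow_pos_of_pos ha _
  have hkey : a^(p-2)*a^2 = a^p := by
    rw [← rpow_two', ← Real.rpow_add ha, show p-2+2 = p by ring]
  have e1 : |a+d|^p = a^p*|1+t|^p := by
    rw [hd, show a + a*t = a*(1+t) by ring, abs_mul, haa,
      Real.mul_rpow (le_of_lt ha) (abs_nonneg _)]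
  have e2 : |d|^p = a^p*|t|^p := by
    rw [hd, abs_mul, haa, Real.mul_rpow (le_of_lt ha) (abs_nonneg _)]
  have e3 : |a|^(p-2)*d^2 = a^p*t^2 := by
    rw [haa, hd]
    linear_combination (t^2)*hkey
  have e4 : (p*|a|^(p-2)*a)*d = a^p*(p*t) := by
    rw [haa, hd]
    linear_combination (p*t)*hkey
  have e5 : |a|^p = a^p := by rw [haa]
  obtain ⟨hL, hU⟩ := scalar_t hp t
  constructor
  · have h := mul_le_mul_of_nonneg_left hL (le_of_lt hap)
    rw [e1, e2, e3, e4, e5]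
    nlinarith [h]
  · have h := mul_le_mul_of_nonneg_left hU (le_of_lt hap)
    rw [e1, e2, e3, e4, e5]
    nlinarith [h]

lemma scalar_all {p : ℝ} (hp : 2 ≤ p) (a d : ℝ) :
    p/8*(|a|^(p-2)*d^2) + (2:ℝ)^(-p-1)*|d|^p ≤ |a+d|^p - |a|^p - (p*|a|^(p-2)*a)*d ∧
    |a+d|^p - |a|^p - (p*|a|^(p-2)*a)*d ≤ 2*p^2*(|a|^(p-2)*d^2) + p^p*|d|^p := by
  rcases lt_trichotomy a 0 with hneg | hzero | hpos
  · have h := scalar_pos hp (show (0:ℝ) < -a by linarith) (-d)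
    have e1 : |-a + -d| = |a+d| := by rw [show -a + -d = -(a+d) by ring, abs_neg]
    have e2 : |-a| = |a| := abs_neg a
    have e3 : |-d| = |d| := abs_neg d
    rw [e1, e2, e3] at h
    obtain ⟨h1, h2⟩ := h
    constructor <;> nlinarith [h1, h2]
  · subst hzero
    have hd0 : (0:ℝ) ≤ |d|^p := Real.rpow_nonneg (abs_nonneg d) _
    have hX : (2:ℝ)^(-p-1) ≤ 1/8 := pow2_small hp
    have hX0 : (0:ℝ) ≤ (2:ℝ)^(-p-1) := Real.rpow_nonneg (by norm_num) _
    have hpp1 : (1:ℝ) ≤ p^p := by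
      nth_rewrite 1 [← Real.one_rpow p]
      exact Real.rpow_le_rpow (by norm_num) (by linarith) (by linarith)
    rcases eq_or_lt_of_le hp with hp2 | hp2
    · -- p = 2
      rw [abs_zero, ← hp2]
      norm_num [Real.rpow_zero]
      constructor <;> nlinarith [sq_nonneg d]
    · -- p > 2
      rw [abs_zero, Real.zero_rpow (show p-2 ≠ 0 by intro h; nlinarith [h]),
        Real.zero_rpow (show p ≠ 0 by intro h; nlinarith [h]), zero_add]
      constructor
      · nlinarith [mul_le_mul_of_nonneg_right hX hd0]
      · nlinarith [mul_le_mul_of_nonneg_right hpp1 hd0]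
  · exact scalar_pos hp hpos d

theorem stmt15 {n : ℕ} (p : ℝ) (hp : 2 ≤ p) (x Δ : Fin n → ℝ) :
    p/8 * (∑ i, |x i| ^ (p - 2) * (Δ i) ^ 2) + (2:ℝ) ^ (-p - 1) * (∑ i, |Δ i| ^ p) ≤
      (∑ i, |x i + Δ i| ^ p) - (∑ i, |x i| ^ p) - (∑ i, (p * |x i| ^ (p - 2) * x i) * Δ i) ∧
    (∑ i, |x i + Δ i| ^ p) - (∑ i, |x i| ^ p) - (∑ i, (p * |x i| ^ (p - 2) * x i) * Δ i) ≤
      2 * p ^ 2 * (∑ i, |x i| ^ (p - 2) * (Δ i) ^ 2) + p ^ p * (∑ i, |Δ i| ^ p) := by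
  constructor
  · have h1 : ∀ i ∈ Finset.univ,
        p/8*(|x i|^(p-2)*(Δ i)^2) + (2:ℝ)^(-p-1)*|Δ i|^p ≤
          |x i + Δ i|^p - |x i|^p - (p*|x i|^(p-2)*(x i))*(Δ i) :=
      fun i _ => (scalar_all hp (x i) (Δ i)).1
    have h2 := Finset.sum_le_sum h1
    rw [Finset.sum_add_distrib, ← Finset.mul_sum, ← Finset.mul_sum,
      Finset.sum_sub_distrib, Finset.sum_sub_distrib] at h2
    exact h2
  · have h1 : ∀ i ∈ Finset.univ,
        |x i + Δ i|^p - |x i|^p - (p*|x i|^(p-2)*(x i))*(Δ i) ≤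
          2*p^2*(|x i|^(p-2)*(Δ i)^2) + p^p*|Δ i|^p :=
      fun i _ => (scalar_all hp (x i) (Δ i)).2
    have h2 := Finset.sum_le_sum h1
    rw [Finset.sum_add_distrib, ← Finset.mul_sum, ← Finset.mul_sum,
      Finset.sum_sub_distrib, Finset.sum_sub_distrib] at h2
    exact h2
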